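/- arXiv:0810.3935 — 3 statements merged into one kernel-verified Lean document; each statement's English description precedes it below -/
import Mathlib

section
/- Let S_a and S_b be axis-aligned squares in the Euclidean plane with side lengths C_a > 0 and C_b > 0, and let K > 0. Assume the separation hypothesis: for every y ∈ S_b, if y ∈ S_a then the closed Euclidean ball of radius K centered at y is contained in S_a, and if y ∉ S_a then that ball is disjoint from S_a. If X and Y are independent random points, X uniformly distributed on S_a and Y uniformly distributed on S_b, then the probability that dist(X, Y) ≤ K equals π·K²·vol(S_a ∩ S_b) / (C_a²·C_b²). -/
open MeasureTheory ProbabilityTheory Real Set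

/-- An axis-aligned square `[x₀, x₀+C] × [y₀, y₀+C]` in the Euclidean plane. -/
def axisSquare (x₀ y₀ C : ℝ) : Set (EuclideanSpace ℝ (Fin 2)) :=
  {p | p 0 ∈ Set.Icc x₀ (x₀ + C) ∧ p 1 ∈ Set.Icc y₀ (y₀ + C)}

lemma axisSquare_eq_preimage (x₀ y₀ C : ℝ) :
    axisSquare x₀ y₀ C = ((MeasurableEquiv.toLp 2 (Fin 2 → ℝ)).symm) ⁻¹'
      (Set.pi Set.univ ![Set.Icc x₀ (x₀ + C), Set.Icc y₀ (y₀ + C)]) := by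
  ext p
  simp [axisSquare, Set.mem_pi, Fin.forall_fin_two, MeasurableEquiv.coe_toLp_symm]

lemma measurableSet_axisSquare (x₀ y₀ C : ℝ) : MeasurableSet (axisSquare x₀ y₀ C) := by
  rw [axisSquare_eq_preimage]
  exact ((MeasurableEquiv.toLp 2 (Fin 2 → ℝ)).symm).measurable
    (MeasurableSet.univ_pi (by
      intro i
      fin_cases i <;> simp [measurableSet_Icc]))

lemma volume_axisSquare (x₀ y₀ C : ℝ) (hC : 0 ≤ C) :
    volume (axisSquare x₀ y₀ C) = ENNReal.ofReal C ^ 2 := by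
  rw [axisSquare_eq_preimage]
  rw [(EuclideanSpace.volume_preserving_symm_measurableEquiv_toLp (Fin 2)).measure_preimage
    ((MeasurableSet.univ_pi (by
      intro i
      fin_cases i <;> simp [measurableSet_Icc])).nullMeasurableSet)]
  rw [volume_pi_pi]
  simp [Fin.prod_univ_two, Real.volume_Icc, sq]

lemma volume_closedBall_two (y : EuclideanSpace ℝ (Fin 2)) (K : ℝ) (hK : 0 ≤ K) :
    volume (Metric.closedBall y K) = ENNReal.ofReal (π * K ^ 2) := by
  rw [EuclideanSpace.volume_closedBall]
  have h2 : ((Fintype.card (Fin 2) : ℕ) : ℝ) / 2 + 1 = 2 := by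
    norm_num
  norm_num [h2, Real.Gamma_two, Real.sq_sqrt pi_nonneg,
    ← ENNReal.ofReal_pow hK, ← ENNReal.ofReal_mul (by positivity : (0:ℝ) ≤ K ^ 2)]
  ring_nf

/-- The probability that two independent points, uniform on squares `Sa` and `Sb`,
are within distance `K` of each other, under the separation hypothesis, equals
`π K² vol(Sa ∩ Sb) / (Ca² Cb²)`. -/
theorem stmt0 {Ω : Type*} [MeasurableSpace Ω] (P : Measure Ω) [IsProbabilityMeasure P]
    (xa ya xb yb Ca Cb K : ℝ) (hCa : 0 < Ca) (hCb : 0 < Cb) (hK : 0 < K)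
    (Sa Sb : Set (EuclideanSpace ℝ (Fin 2)))
    (hSa : Sa = axisSquare xa ya Ca) (hSb : Sb = axisSquare xb yb Cb)
    (hsep : ∀ y ∈ Sb,
      (y ∈ Sa → Metric.closedBall y K ⊆ Sa) ∧
      (y ∉ Sa → Disjoint (Metric.closedBall y K) Sa))
    (X Y : Ω → EuclideanSpace ℝ (Fin 2))
    (hX : Measurable X) (hY : Measurable Y)
    (hXY : IndepFun X Y P)
    (hlawX : P.map X = ProbabilityTheory.cond volume Sa)
    (hlawY : P.map Y = ProbabilityTheory.cond volume Sb) :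
    (P {ω | dist (X ω) (Y ω) ≤ K}).toReal =
      π * K ^ 2 * (volume (Sa ∩ Sb)).toReal / (Ca ^ 2 * Cb ^ 2) := by
  have hSam : MeasurableSet Sa := hSa ▸ measurableSet_axisSquare xa ya Ca
  have hSbm : MeasurableSet Sb := hSb ▸ measurableSet_axisSquare xb yb Cb
  have hvolSa : volume Sa = ENNReal.ofReal Ca ^ 2 := by
    rw [hSa, volume_axisSquare _ _ _ hCa.le]
  have hvolSb : volume Sb = ENNReal.ofReal Cb ^ 2 := by
    rw [hSb, volume_axisSquare _ _ _ hCb.le]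
  have hSa_ne : volume Sa ≠ 0 := by
    rw [hvolSa]; positivity
  have hSa_fin : volume Sa ≠ ⊤ := by
    rw [hvolSa]; exact (ENNReal.pow_ne_top ENNReal.ofReal_ne_top)
  have hSb_ne : volume Sb ≠ 0 := by
    rw [hvolSb]; positivity
  have hSb_fin : volume Sb ≠ ⊤ := by
    rw [hvolSb]; exact (ENNReal.pow_ne_top ENNReal.ofReal_ne_top)
  -- the event as a preimage
  set T : Set (EuclideanSpace ℝ (Fin 2) × EuclideanSpace ℝ (Fin 2)) :=
    {p | dist p.2 p.1 ≤ K} with hT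
  have hTmeas : MeasurableSet T := by
    have : IsClosed T := isClosed_le (by fun_prop) continuous_const
    exact this.measurableSet
  have hset : {ω | dist (X ω) (Y ω) ≤ K} = (fun ω => (Y ω, X ω)) ⁻¹' T := rfl
  have hmap : P.map (fun ω => (Y ω, X ω)) =
      (P.map Y).prod (P.map X) := by
    exact (indepFun_iff_map_prod_eq_prod_map_map hY.aemeasurable hX.aemeasurable).mp hXY.symm
  have hPval : P {ω | dist (X ω) (Y ω) ≤ K} =
      ((P.map Y).prod (P.map X)) T := by
    rw [hset, ← hmap, Measure.map_apply (hY.prodMk hX) hTmeas]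
  have hinstA : IsProbabilityMeasure (ProbabilityTheory.cond volume Sa) :=
    cond_isProbabilityMeasure_of_finite hSa_ne hSa_fin
  have hinstB : IsProbabilityMeasure (ProbabilityTheory.cond volume Sb) :=
    cond_isProbabilityMeasure_of_finite hSb_ne hSb_fin
  rw [hPval, hlawX, hlawY]
  have hprod : ((ProbabilityTheory.cond volume Sb).prod (ProbabilityTheory.cond volume Sa)) T =
      ∫⁻ y, (ProbabilityTheory.cond volume Sa) (Metric.closedBall y K)
        ∂(ProbabilityTheory.cond volume Sb) := by
    rw [Measure.prod_apply hTmeas]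
    rfl
  set c : ENNReal := (volume Sa)⁻¹ * ENNReal.ofReal (π * K ^ 2) with hc
  have hint : ∀ y ∈ Sb, (ProbabilityTheory.cond volume Sa) (Metric.closedBall y K)
      = Sa.indicator (fun _ => c) y := by
    intro y hy
    rw [cond_apply hSam]
    by_cases hySa : y ∈ Sa
    · have hsub := (hsep y hy).1 hySa
      simp [Set.inter_eq_right.mpr hsub, volume_closedBall_two y K hK.le,
        Set.indicator_of_mem hySa, hc]
    · have hdisj := (hsep y hy).2 hySa
      rw [Set.indicator_of_notMem hySa, hdisj.symm.inter_eq,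
        measure_empty, mul_zero]
  have hcond_def : (ProbabilityTheory.cond volume Sb) =
      (volume Sb)⁻¹ • volume.restrict Sb := rfl
  have hlint : ∫⁻ y, (ProbabilityTheory.cond volume Sa) (Metric.closedBall y K)
        ∂(ProbabilityTheory.cond volume Sb)
      = (volume Sb)⁻¹ * (c * volume (Sa ∩ Sb)) := by
    rw [hcond_def, lintegral_smul_measure]
    congr 1
    rw [show ∫⁻ y, (ProbabilityTheory.cond volume Sa) (Metric.closedBall y K)
        ∂(volume.restrict Sb)
        = ∫⁻ y, Sa.indicator (fun _ => c) y ∂(volume.restrict Sb) from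
      setLIntegral_congr_fun hSbm hint]
    rw [lintegral_indicator hSam, setLIntegral_const,
      Measure.restrict_apply hSam]
  rw [hprod, hlint, hc, hvolSa, hvolSb]
  have hfin : volume (Sa ∩ Sb) ≠ ⊤ := by
    exact ne_top_of_le_ne_top hSa_fin (measure_mono Set.inter_subset_left)
  rw [ENNReal.toReal_mul, ENNReal.toReal_mul, ENNReal.toReal_mul,
    ENNReal.toReal_inv, ENNReal.toReal_inv, ENNReal.toReal_pow, ENNReal.toReal_pow,
    ENNReal.toReal_ofReal hCa.le, ENNReal.toReal_ofReal hCb.le,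
    ENNReal.toReal_ofReal (by positivity)]
  rw [div_eq_mul_inv, mul_inv]
  ring
end

section
/- Fix V ≥ 1 and q : Fin V → ℝ with 0 ≤ q_t ≤ 1 for all t; define p : ℕ → ℝ by p_n = q_{n mod V}, and set P := 1 − ∏_{t=0}^{V−1}(1 − q_t). Assume P > 0. Then for every t < V, Σ_{m=0}^{∞} (∏_{k < mV + t} (1 − p_k))·p_{mV + t} = (∏_{i<t}(1 − q_i))·q_t / P. That is, for independent Bernoulli trials where trial n succeeds with probability p_n, the probability that the first success occurs at an index congruent to t modulo V equals (∏_{i<t}(1 − q_i))·q_t / P. -/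
/-- For cyclic Bernoulli trials with per-step success probabilities `p_n = q_{n mod V}`,
the probability that the first success occurs at an index congruent to `t` modulo `V`
equals `(∏_{i<t}(1 − q_i)) q_t / P`, where `P = 1 − ∏_t (1 − q_t)`. -/
theorem stmt4 (V : ℕ) (hV : 0 < V) (q : Fin V → ℝ)
    (hq0 : ∀ t, 0 ≤ q t) (hq1 : ∀ t, q t ≤ 1)
    (p : ℕ → ℝ) (hp : ∀ n, p n = q ⟨n % V, Nat.mod_lt n hV⟩)
    (P : ℝ) (hP : P = 1 - ∏ t : Fin V, (1 - q t)) (hPpos : 0 < P)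
    (t : Fin V) :
    ∑' m : ℕ, (∏ k ∈ Finset.range (m * V + (t : ℕ)), (1 - p k)) * p (m * V + (t : ℕ)) =
      (∏ i ∈ Finset.Iio t, (1 - q i)) * q t / P := by
  set Q : ℝ := ∏ s : Fin V, (1 - q s) with hQ
  have hpq : ∀ (m : ℕ) (j : Fin V), p (m * V + (j : ℕ)) = q j := by
    intro m j
    rw [hp]
    congr 1
    ext
    simp [Nat.mul_comm m V, Nat.mul_add_mod, Nat.mod_eq_of_lt j.isLt]
  -- Product over one full cycle
  have hcycle : ∀ m : ℕ, ∏ k ∈ Finset.range V, (1 - p (m * V + k)) = Q := by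
    intro m
    rw [hQ, ← Fin.prod_univ_eq_prod_range (fun k => (1 - p (m * V + k))) V]
    exact Finset.prod_congr rfl fun j _ => by rw [hpq m j]
  have hprodmV : ∀ m : ℕ, ∏ k ∈ Finset.range (m * V), (1 - p k) = Q ^ m := by
    intro m
    induction m with
    | zero => simp
    | succ m ih =>
      rw [Nat.succ_mul, Finset.prod_range_add, ih, hcycle, pow_succ]
  -- partial product up to t within cycle
  have hIio : ∀ m : ℕ, ∏ k ∈ Finset.range (t : ℕ), (1 - p (m * V + k)) =
      ∏ i ∈ Finset.Iio t, (1 - q i) := by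
    intro m
    rw [(Nat.Iio_eq_range (t : ℕ)).symm, ← Fin.map_valEmbedding_Iio, Finset.prod_map]
    exact Finset.prod_congr rfl fun j _ => by rw [Fin.valEmbedding_apply, hpq m j]
  have hterm : ∀ m : ℕ,
      (∏ k ∈ Finset.range (m * V + (t : ℕ)), (1 - p k)) * p (m * V + (t : ℕ)) =
      Q ^ m * ((∏ i ∈ Finset.Iio t, (1 - q i)) * q t) := by
    intro m
    rw [Finset.prod_range_add, hprodmV, hIio, hpq m t, mul_assoc]
  have hQ0 : 0 ≤ Q := Finset.prod_nonneg fun s _ => by linarith [hq1 s]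
  have hQ1 : Q < 1 := by rw [hP] at hPpos; linarith
  calc ∑' m : ℕ, (∏ k ∈ Finset.range (m * V + (t : ℕ)), (1 - p k)) * p (m * V + (t : ℕ))
      = ∑' m : ℕ, Q ^ m * ((∏ i ∈ Finset.Iio t, (1 - q i)) * q t) := by
        exact tsum_congr hterm
    _ = (∑' m : ℕ, Q ^ m) * ((∏ i ∈ Finset.Iio t, (1 - q i)) * q t) := by
        rw [tsum_mul_right]
    _ = (∏ i ∈ Finset.Iio t, (1 - q i)) * q t / P := by
        rw [tsum_geometric_of_lt_one hQ0 hQ1, hP]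
        field_simp
end

section
/- Fix V ≥ 1 and q : Fin V → ℝ with 0 ≤ q_t ≤ 1 for all t; define p : ℕ → ℝ by p_n = q_{n mod V}, and set s := ∏_{t=0}^{V−1}(1 − q_t). Assume s < 1. Then Σ_{n=0}^{∞} ∏_{k<n}(1 − p_k) = (Σ_{m=0}^{V−1} ∏_{k<m}(1 − q_k)) / (1 − s). That is, for independent Bernoulli trials where trial n succeeds with probability p_n, the expected index of the first success (equal to the sum over n of the probability that the first n trials all fail) is given by this closed-form expression. -/
/-- For cyclic Bernoulli trials with per-step success probabilities `p_n = q_{n mod V}`,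
the expected index of the first success, `Σ_n ∏_{k<n} (1 − p_k)`, equals
`(Σ_{m<V} ∏_{k<m} (1 − q_k)) / (1 − s)` where `s = ∏_t (1 − q_t)`. -/
theorem stmt5 (V : ℕ) (hV : 0 < V) (q : Fin V → ℝ)
    (hq0 : ∀ t, 0 ≤ q t) (hq1 : ∀ t, q t ≤ 1)
    (p : ℕ → ℝ) (hp : ∀ n, p n = q ⟨n % V, Nat.mod_lt n hV⟩)
    (s : ℝ) (hs : s = ∏ t : Fin V, (1 - q t)) (hslt : s < 1) :
    ∑' n : ℕ, ∏ k ∈ Finset.range n, (1 - p k) =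
      (∑ m : Fin V, ∏ k ∈ Finset.Iio m, (1 - q k)) / (1 - s) := by
  haveI : NeZero V := ⟨hV.ne'⟩
  set a : ℕ → ℝ := fun n => ∏ k ∈ Finset.range n, (1 - p k) with ha
  have hs0 : 0 ≤ s := by
    rw [hs]; exact Finset.prod_nonneg fun t _ => by linarith [hq1 t]
  -- periodicity step
  have key : ∀ n, a (n + V) = a n * s := by
    intro n
    have h1 : a (n + V) = a n * ∏ i ∈ Finset.range V, (1 - p (n + i)) := by
      rw [ha]; simp [Finset.prod_range_add]
    rw [h1]
    congr 1
    rw [← Fin.prod_univ_eq_prod_range (fun i => (1 - p (n + i))) V, hs]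
    have : ∀ i : Fin V, (1 : ℝ) - p (n + i) = 1 - q ((⟨n % V, Nat.mod_lt n hV⟩ : Fin V) + i) := by
      intro i
      rw [hp]
      refine congrArg (fun t => 1 - q t) (Fin.ext ?_)
      show (n + i.val) % V = (n % V + i.val) % V
      conv_lhs => rw [Nat.add_mod]
      conv_rhs => rw [Nat.add_mod, Nat.mod_mod_of_dvd n dvd_rfl]
    rw [Fintype.prod_congr _ _ this]
    exact Fintype.prod_equiv (Equiv.addLeft (⟨n % V, Nat.mod_lt n hV⟩ : Fin V)) _ _ (fun i => rfl)
  have key2 : ∀ (j : ℕ) (m : ℕ), a (j * V + m) = s ^ j * a m := by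
    intro j
    induction j with
    | zero => intro m; simp
    | succ j ih =>
      intro m
      have : (j + 1) * V + m = (j * V + m) + V := by ring
      rw [this, key, ih, pow_succ]; ring
  -- summability of geometric
  have hgeom : Summable (fun j : ℕ => s ^ j) := summable_geometric_of_lt_one hs0 hslt
  -- rewrite tsum via the equivalence
  have hre : ∑' n : ℕ, a n = ∑' x : ℕ × Fin V, a (x.1 * V + x.2) := by
    rw [← Equiv.tsum_eq (Nat.divModEquiv V).symm a]
    exact tsum_congr fun x => congrArg a (by simp)
  have hb : ∀ x : ℕ × Fin V, a (x.1 * V + x.2) = s ^ x.1 * a x.2 := fun x => key2 x.1 x.2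
  have hsum2 : Summable (fun x : ℕ × Fin V => s ^ x.1 * a x.2.val) := by
    have h1 : (0 : ℕ → ℝ) ≤ fun j => s ^ j := fun j => pow_nonneg hs0 j
    have h2 : (0 : Fin V → ℝ) ≤ fun m => a m.val := fun m =>
      Finset.prod_nonneg fun k _ => by
        rw [hp]; linarith [hq1 (⟨k % V, Nat.mod_lt k hV⟩ : Fin V)]
    exact Summable.mul_of_nonneg (f := fun j : ℕ => s ^ j) (g := fun m : Fin V => a m.val) hgeom Summable.of_finite h1 h2
  have hre2 : ∑' x : ℕ × Fin V, a (x.1 * V + x.2) =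
      (∑' j : ℕ, s ^ j) * ∑ m : Fin V, a m.val := by
    calc ∑' x : ℕ × Fin V, a (x.1 * V + x.2)
        = ∑' x : ℕ × Fin V, s ^ x.1 * a x.2.val := tsum_congr hb
      _ = ∑' (j : ℕ) (m : Fin V), s ^ j * a m.val := Summable.tsum_prod' hsum2 (fun b => Summable.of_finite)
      _ = ∑' j : ℕ, s ^ j * ∑ m : Fin V, a m.val := by
          refine tsum_congr fun j => ?_
          rw [tsum_fintype, ← Finset.mul_sum]
      _ = (∑' j : ℕ, s ^ j) * ∑ m : Fin V, a m.val := tsum_mul_right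
  have hgt : ∑' j : ℕ, s ^ j = (1 - s)⁻¹ := tsum_geometric_of_lt_one hs0 hslt
  have hiq : ∀ m : Fin V, a m.val = ∏ k ∈ Finset.Iio m, (1 - q k) := by
    intro m
    rw [ha]
    simp only [← Nat.Iio_eq_range, ← Fin.map_valEmbedding_Iio, Finset.prod_map]
    refine Finset.prod_congr rfl fun k _ => ?_
    rw [hp]
    congr 1
    exact congrArg q (Fin.ext (by simp [Nat.mod_eq_of_lt k.isLt]))
  rw [hre, hre2, hgt, Finset.sum_congr rfl (fun m _ => hiq m)]
  rw [div_eq_mul_inv, mul_comm]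
end
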